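/- For all τ ∈ ℍ and all z = (z₁,…,z₁₂) ∈ ℂ^{12} one has the halving identity φ11(τ/2, z) = φ01(τ,z)·φ11(τ,z), where τ/2 ∈ ℍ. -/

import Mathlib

open Complex

/-- `ee w = exp(2πiw)`; thus `q^r = ee (r·τ)` and `ζ^r = ee (r·u)`. -/
noncomputable def ee (w : ℂ) : ℂ := Complex.exp (2 * Real.pi * Complex.I * w)

/-- The Dedekind eta function `η(τ) = q^{1/24} ∏_{n≥1} (1 − qⁿ)`. -/
noncomputable def dedekindEta (τ : UpperHalfPlane) : ℂ :=
  ee ((τ : ℂ) / 24) * ∏' n : ℕ, (1 - ee (((n : ℂ) + 1) * (τ : ℂ)))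

/-- `ϑ11(τ,u) = −q^{1/8} ζ^{−1/2} ∏_{n≥1} (1−q^{n−1}ζ)(1−qⁿζ^{−1})(1−qⁿ)`. -/
noncomputable def th11 (τ : UpperHalfPlane) (u : ℂ) : ℂ :=
  -(ee ((τ : ℂ) / 8) * ee (-u / 2)) *
    ∏' n : ℕ, ((1 - ee ((n : ℂ) * (τ : ℂ)) * ee u) *
      (1 - ee (((n : ℂ) + 1) * (τ : ℂ)) * ee (-u)) * (1 - ee (((n : ℂ) + 1) * (τ : ℂ))))

/-- `ϑ01(τ,u) = ∏_{n≥1} (1−qⁿ)(1−q^{n−1/2}ζ)(1−q^{n−1/2}ζ^{−1})`. -/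
noncomputable def th01 (τ : UpperHalfPlane) (u : ℂ) : ℂ :=
  ∏' n : ℕ, ((1 - ee (((n : ℂ) + 1) * (τ : ℂ))) *
    (1 - ee (((n : ℂ) + 1 / 2) * (τ : ℂ)) * ee u) *
    (1 - ee (((n : ℂ) + 1 / 2) * (τ : ℂ)) * ee (-u)))

/-- `φ01(τ,z) = η(τ)^{−12} ∏_{j=1}^{12} ϑ01(τ,z_j)`. -/
noncomputable def phi01 (τ : UpperHalfPlane) (z : Fin 12 → ℂ) : ℂ :=
  (dedekindEta τ ^ 12)⁻¹ * ∏ j, th01 τ (z j)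

/-- `φ11(τ,z) = η(τ)^{−12} ∏_{j=1}^{12} ϑ11(τ,z_j)`. -/
noncomputable def phi11 (τ : UpperHalfPlane) (z : Fin 12 → ℂ) : ℂ :=
  (dedekindEta τ ^ 12)⁻¹ * ∏ j, th11 τ (z j)

/-- `τ/2` as a point of the upper half-plane. -/
noncomputable def halfH (τ : UpperHalfPlane) : UpperHalfPlane :=
  ⟨(τ : ℂ) / 2, by
    have h := τ.im_pos
    rw [Complex.div_im]
    simp [UpperHalfPlane.coe_im]
    positivity⟩

lemma ee_add (a b : ℂ) : ee (a + b) = ee a * ee b := by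
  simp [ee, mul_add, Complex.exp_add]

lemma ee_ne_zero (w : ℂ) : ee w ≠ 0 := Complex.exp_ne_zero _

lemma ee_pow (w : ℂ) (n : ℕ) : ee w ^ n = ee ((n : ℂ) * w) := by
  rw [ee, ee, ← Complex.exp_nat_mul]
  ring_nf

lemma norm_ee_lt_one {w : ℂ} (hw : 0 < w.im) : ‖ee w‖ < 1 := by
  rw [ee, Complex.norm_exp]
  rw [Real.exp_lt_one_iff]
  have h2 : (2 * (Real.pi:ℂ) * Complex.I * w).re = -(2 * Real.pi * w.im) := by
    simp [Complex.mul_re, Complex.mul_im]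
  rw [h2]
  have := Real.pi_pos
  nlinarith

lemma hasProd_zero_of_eq_zero {f : ℕ → ℂ} {n : ℕ} (h : f n = 0) : HasProd f 0 := by
  rw [HasProd]
  apply Filter.Tendsto.congr' (f₁ := fun _ => 0)
  · filter_upwards [Filter.eventually_atTop.2 ⟨{n}, fun s hs => hs⟩] with s hs
    exact (Finset.prod_eq_zero (hs (Finset.mem_singleton_self n)) h).symm
  · exact tendsto_const_nhds

noncomputable def Pg (c y : ℂ) : ℂ := ∏' n : ℕ, (1 - c * y ^ n)

lemma summable_log_P (c : ℂ) {y : ℂ} (hy : ‖y‖ < 1) :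
    Summable fun n : ℕ => Complex.log (1 - c * y ^ n) := by
  apply Summable.of_norm_bounded_eventually_nat (g := fun n => 3 / 2 * (‖c‖ * ‖y‖ ^ n))
  · exact (summable_geometric_of_lt_one (norm_nonneg y) hy).mul_left _ |>.mul_left _
  · have h0 : Filter.Tendsto (fun n : ℕ => ‖c‖ * ‖y‖ ^ n) Filter.atTop (nhds 0) := by
      simpa using (tendsto_pow_atTop_nhds_zero_of_lt_one (norm_nonneg y) hy).const_mul ‖c‖
    filter_upwards [h0.eventually_le_const (by norm_num : (0:ℝ) < 1/2)] with n hn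
    have hb : ‖-(c * y ^ n)‖ ≤ 1 / 2 := by
      rw [norm_neg]
      calc ‖c * y ^ n‖ ≤ ‖c‖ * ‖y‖ ^ n := by rw [norm_mul, norm_pow]
        _ ≤ 1/2 := hn
    have := Complex.norm_log_one_add_half_le_self hb
    rw [← sub_eq_add_neg] at this
    refine this.trans ?_
    rw [norm_neg]
    have : ‖c * y ^ n‖ ≤ ‖c‖ * ‖y‖ ^ n := by rw [norm_mul, norm_pow]
    nlinarith

lemma multipliable_P (c : ℂ) {y : ℂ} (hy : ‖y‖ < 1) :
    Multipliable fun n : ℕ => 1 - c * y ^ n := by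
  by_cases h : ∀ n : ℕ, 1 - c * y ^ n ≠ 0
  · exact Complex.multipliable_of_summable_log (summable_log_P c hy)
  · push_neg at h
    obtain ⟨n, hn⟩ := h
    exact ⟨0, hasProd_zero_of_eq_zero hn⟩

lemma P_ne_zero {c y : ℂ} (hy : ‖y‖ < 1) (hc : ‖c‖ < 1) : Pg c y ≠ 0 := by
  have h0 : ∀ n : ℕ, 1 - c * y ^ n ≠ 0 := by
    intro n
    have : ‖c * y ^ n‖ < 1 := by
      calc ‖c * y ^ n‖ ≤ ‖c‖ * ‖y‖ ^ n := by rw [norm_mul, norm_pow]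
        _ ≤ ‖c‖ * 1 := by
            gcongr
            exact pow_le_one₀ (norm_nonneg y) hy.le
        _ < 1 := by simpa using hc
    intro h
    rw [sub_eq_zero] at h
    rw [← h] at this
    simp at this
  have := Complex.cexp_tsum_eq_tprod (f := fun n => 1 - c * y ^ n) h0 (summable_log_P c hy)
  rw [Pg, ← this]
  exact Complex.exp_ne_zero _

lemma P_split (c : ℂ) {x : ℂ} (hx : ‖x‖ < 1) :
    Pg c x = Pg c (x ^ 2) * Pg (c * x) (x ^ 2) := by
  have hx0 : 0 ≤ ‖x‖ := norm_nonneg x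
  have hx2 : ‖x ^ 2‖ < 1 := by
    rw [norm_pow]
    nlinarith
  have he : (fun k : ℕ => 1 - c * x ^ (2 * k)) = fun k : ℕ => 1 - c * (x ^ 2) ^ k := by
    ext k; rw [pow_mul]
  have ho : (fun k : ℕ => 1 - c * x ^ (2 * k + 1)) = fun k : ℕ => 1 - c * x * (x ^ 2) ^ k := by
    ext k; rw [pow_succ, pow_mul]; ring
  have := tprod_even_mul_odd (f := fun n : ℕ => 1 - c * x ^ n)
    (by rw [show (fun k : ℕ => 1 - c * x ^ (2 * k)) = fun k : ℕ => 1 - c * (x ^ 2) ^ k from he]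
        exact multipliable_P c hx2)
    (by rw [show (fun k : ℕ => 1 - c * x ^ (2 * k + 1)) = fun k : ℕ => 1 - c * x * (x ^ 2) ^ k from ho]
        exact multipliable_P (c * x) hx2)
  rw [Pg, ← this, Pg, Pg]
  congr 1
  · exact tprod_congr fun k => by rw [pow_mul]
  · exact tprod_congr fun k => by rw [pow_succ, pow_mul]; ring

lemma halfH_coe (τ : UpperHalfPlane) : ((halfH τ : UpperHalfPlane) : ℂ) = (τ : ℂ) / 2 := rfl

lemma ee_nat_mul (w : ℂ) (n : ℕ) : ee ((n : ℂ) * w) = ee w ^ n := (ee_pow w n).symm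

lemma ee_succ_mul (w : ℂ) (n : ℕ) : ee (((n : ℂ) + 1) * w) = ee w * ee w ^ n := by
  rw [ee_pow, ← ee_add]; congr 1; ring

lemma ee_half_mul (τ : UpperHalfPlane) (n : ℕ) :
    ee (((n : ℂ) + 1 / 2) * (τ : ℂ)) = ee ((τ : ℂ) / 2) * (ee ((τ : ℂ) / 2) ^ 2) ^ n := by
  rw [← pow_mul, ee_pow, ← ee_add]; congr 1; push_cast; ring

lemma ee_tau (τ : UpperHalfPlane) : ee (τ : ℂ) = ee ((τ : ℂ) / 2) ^ 2 := by
  rw [sq, ← ee_add]; congr 1; ring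

lemma norm_x_lt_one (τ : UpperHalfPlane) : ‖ee ((τ : ℂ) / 2)‖ < 1 := by
  apply norm_ee_lt_one
  have h := τ.im_pos
  rw [Complex.div_im]
  simp [UpperHalfPlane.coe_im]
  positivity

lemma norm_x2_lt_one (τ : UpperHalfPlane) : ‖ee ((τ : ℂ) / 2) ^ 2‖ < 1 := by
  have h := norm_x_lt_one τ
  have h0 := norm_nonneg (ee ((τ : ℂ) / 2))
  rw [norm_pow]
  nlinarith

lemma eta_half_eq (τ : UpperHalfPlane) :
    dedekindEta (halfH τ) = ee ((τ : ℂ) / 48) *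
      (Pg (ee ((τ : ℂ) / 2)) (ee ((τ : ℂ) / 2) ^ 2) *
       Pg (ee ((τ : ℂ) / 2) ^ 2) (ee ((τ : ℂ) / 2) ^ 2)) := by
  set x := ee ((τ : ℂ) / 2) with hxdef
  rw [dedekindEta, halfH_coe]
  rw [show (τ : ℂ) / 2 / 24 = (τ : ℂ) / 48 by ring]
  congr 1
  have h1 : ∏' n : ℕ, (1 - ee (((n : ℂ) + 1) * ((τ : ℂ) / 2))) = Pg x x :=
    tprod_congr fun n => by rw [ee_succ_mul]
  rw [h1, P_split x (norm_x_lt_one τ), show x * x = x ^ 2 from (sq x).symm]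

lemma eta_eq (τ : UpperHalfPlane) :
    dedekindEta τ = ee ((τ : ℂ) / 24) *
      Pg (ee ((τ : ℂ) / 2) ^ 2) (ee ((τ : ℂ) / 2) ^ 2) := by
  rw [dedekindEta]
  congr 1
  exact tprod_congr fun n => by rw [ee_succ_mul, ee_tau]

lemma th01_eq (τ : UpperHalfPlane) (u : ℂ) :
    th01 τ u = Pg (ee ((τ : ℂ) / 2) ^ 2) (ee ((τ : ℂ) / 2) ^ 2) *
      (Pg (ee ((τ : ℂ) / 2) * ee u) (ee ((τ : ℂ) / 2) ^ 2) *
       Pg (ee ((τ : ℂ) / 2) * ee (-u)) (ee ((τ : ℂ) / 2) ^ 2)) := by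
  have hx2 := norm_x2_lt_one τ
  rw [th01]
  have h1 : ∏' n : ℕ, ((1 - ee (((n : ℂ) + 1) * (τ : ℂ))) *
      (1 - ee (((n : ℂ) + 1 / 2) * (τ : ℂ)) * ee u) *
      (1 - ee (((n : ℂ) + 1 / 2) * (τ : ℂ)) * ee (-u))) =
      ∏' n : ℕ, ((1 - ee ((τ : ℂ) / 2) ^ 2 * (ee ((τ : ℂ) / 2) ^ 2) ^ n) * (1 - ee ((τ : ℂ) / 2) * ee u * (ee ((τ : ℂ) / 2) ^ 2) ^ n) *
        (1 - ee ((τ : ℂ) / 2) * ee (-u) * (ee ((τ : ℂ) / 2) ^ 2) ^ n)) := by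
    refine tprod_congr fun n => ?_
    rw [ee_succ_mul, ee_tau, ee_half_mul]
    ring_nf
  rw [h1, Multipliable.tprod_mul ((multipliable_P _ hx2).mul (multipliable_P _ hx2)) (multipliable_P _ hx2),
    Multipliable.tprod_mul (multipliable_P _ hx2) (multipliable_P _ hx2)]
  rw [Pg, Pg, Pg]
  ring

lemma th11_eq (τ : UpperHalfPlane) (u : ℂ) :
    th11 τ u = (-1) * (ee ((τ : ℂ) / 8) * ee (-u / 2) *
      (Pg (ee u) (ee ((τ : ℂ) / 2) ^ 2) *
       (Pg (ee ((τ : ℂ) / 2) ^ 2 * ee (-u)) (ee ((τ : ℂ) / 2) ^ 2) *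
        Pg (ee ((τ : ℂ) / 2) ^ 2) (ee ((τ : ℂ) / 2) ^ 2)))) := by
  have hx2 := norm_x2_lt_one τ
  rw [th11]
  have h1 : ∏' n : ℕ, ((1 - ee ((n : ℂ) * (τ : ℂ)) * ee u) *
      (1 - ee (((n : ℂ) + 1) * (τ : ℂ)) * ee (-u)) * (1 - ee (((n : ℂ) + 1) * (τ : ℂ)))) =
      ∏' n : ℕ, ((1 - ee u * (ee ((τ : ℂ) / 2) ^ 2) ^ n) * (1 - ee ((τ : ℂ) / 2) ^ 2 * ee (-u) * (ee ((τ : ℂ) / 2) ^ 2) ^ n) *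
        (1 - ee ((τ : ℂ) / 2) ^ 2 * (ee ((τ : ℂ) / 2) ^ 2) ^ n)) := by
    refine tprod_congr fun n => ?_
    rw [ee_nat_mul, ee_succ_mul, ee_tau]
    ring_nf
  rw [h1, Multipliable.tprod_mul ((multipliable_P _ hx2).mul (multipliable_P _ hx2)) (multipliable_P _ hx2),
    Multipliable.tprod_mul (multipliable_P _ hx2) (multipliable_P _ hx2)]
  rw [Pg, Pg, Pg]
  ring

lemma th11_half_eq (τ : UpperHalfPlane) (u : ℂ) :
    th11 (halfH τ) u = (-1) * (ee ((τ : ℂ) / 16) * ee (-u / 2) *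
      ((Pg (ee u) (ee ((τ : ℂ) / 2) ^ 2) * Pg (ee ((τ : ℂ) / 2) * ee u) (ee ((τ : ℂ) / 2) ^ 2)) *
       ((Pg (ee ((τ : ℂ) / 2) * ee (-u)) (ee ((τ : ℂ) / 2) ^ 2) *
         Pg (ee ((τ : ℂ) / 2) ^ 2 * ee (-u)) (ee ((τ : ℂ) / 2) ^ 2)) *
        (Pg (ee ((τ : ℂ) / 2)) (ee ((τ : ℂ) / 2) ^ 2) *
         Pg (ee ((τ : ℂ) / 2) ^ 2) (ee ((τ : ℂ) / 2) ^ 2))))) := by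
  have hx := norm_x_lt_one τ
  rw [th11, halfH_coe]
  rw [show (τ : ℂ) / 2 / 8 = (τ : ℂ) / 16 by ring]
  have h1 : ∏' n : ℕ, ((1 - ee ((n : ℂ) * ((τ : ℂ) / 2)) * ee u) *
      (1 - ee (((n : ℂ) + 1) * ((τ : ℂ) / 2)) * ee (-u)) *
      (1 - ee (((n : ℂ) + 1) * ((τ : ℂ) / 2)))) =
      ∏' n : ℕ, ((1 - ee u * ee ((τ : ℂ) / 2) ^ n) * (1 - ee ((τ : ℂ) / 2) * ee (-u) * ee ((τ : ℂ) / 2) ^ n) * (1 - ee ((τ : ℂ) / 2) * ee ((τ : ℂ) / 2) ^ n)) := by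
    refine tprod_congr fun n => ?_
    rw [ee_nat_mul, ee_succ_mul]
    ring_nf
  rw [h1, Multipliable.tprod_mul ((multipliable_P _ hx).mul (multipliable_P _ hx)) (multipliable_P _ hx),
    Multipliable.tprod_mul (multipliable_P _ hx) (multipliable_P _ hx)]
  rw [show (∏' n : ℕ, (1 - ee u * ee ((τ : ℂ) / 2) ^ n)) = Pg (ee u) (ee ((τ : ℂ) / 2)) from rfl,
    show (∏' n : ℕ, (1 - ee ((τ : ℂ) / 2) * ee (-u) * ee ((τ : ℂ) / 2) ^ n)) = Pg (ee ((τ : ℂ) / 2) * ee (-u)) (ee ((τ : ℂ) / 2)) from rfl,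
    show (∏' n : ℕ, (1 - ee ((τ : ℂ) / 2) * ee ((τ : ℂ) / 2) ^ n)) = Pg (ee ((τ : ℂ) / 2)) (ee ((τ : ℂ) / 2)) from rfl,
    P_split (ee u) hx, P_split (ee ((τ : ℂ) / 2) * ee (-u)) hx, P_split (ee ((τ : ℂ) / 2)) hx,
    show ee u * ee ((τ : ℂ) / 2) = ee ((τ : ℂ) / 2) * ee u by ring, show ee ((τ : ℂ) / 2) * ee (-u) * ee ((τ : ℂ) / 2) = ee ((τ : ℂ) / 2) ^ 2 * ee (-u) by ring,
    show ee ((τ : ℂ) / 2) * ee ((τ : ℂ) / 2) = ee ((τ : ℂ) / 2) ^ 2 from (sq (ee ((τ : ℂ) / 2))).symm]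
  ring

/-- The halving identity `φ11(τ/2, z) = φ01(τ,z) · φ11(τ,z)`. -/
theorem phi11_halving (τ : UpperHalfPlane) (z : Fin 12 → ℂ) :
    phi11 (halfH τ) z = phi01 τ z * phi11 τ z := by
  have hx := norm_x_lt_one τ
  have hx2 := norm_x2_lt_one τ
  have hS : Pg (ee ((τ : ℂ) / 2)) (ee ((τ : ℂ) / 2) ^ 2) ≠ 0 := P_ne_zero hx2 hx
  have hR : Pg (ee ((τ : ℂ) / 2) ^ 2) (ee ((τ : ℂ) / 2) ^ 2) ≠ 0 := P_ne_zero hx2 hx2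
  have hE : ee ((τ:ℂ)/16) ^ 12 * ee ((τ:ℂ)/24) ^ 24 = ee ((τ:ℂ)/8) ^ 12 * ee ((τ:ℂ)/48) ^ 12 := by
    rw [ee_pow, ee_pow, ee_pow, ee_pow, ← ee_add, ← ee_add]
    congr 1
    ring
  rw [phi11, phi11, phi01]
  simp only [th11_half_eq, eta_half_eq]
  simp only [th01_eq, th11_eq, eta_eq]
  simp only [Finset.prod_mul_distrib, Finset.prod_const, Finset.card_univ, Fintype.card_fin]
  have hx0 := ee_ne_zero ((τ : ℂ) / 48)
  have hx1 := ee_ne_zero ((τ : ℂ) / 24)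
  field_simp
  linear_combination ((∏ x : Fin 12, ee (-(z x / 2))) *
    (∏ x : Fin 12, Pg (ee (z x)) (ee ((τ : ℂ) / 2) ^ 2)) *
    (∏ x : Fin 12, Pg (ee ((τ : ℂ) / 2) * ee (z x)) (ee ((τ : ℂ) / 2) ^ 2)) *
    (∏ x : Fin 12, Pg (ee ((τ : ℂ) / 2) * ee (-z x)) (ee ((τ : ℂ) / 2) ^ 2)) *
    (∏ x : Fin 12, Pg (ee ((τ : ℂ) / 2) ^ 2 * ee (-z x)) (ee ((τ : ℂ) / 2) ^ 2))) * hE
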